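/- Fix i ∈ [r], set ρ_i := w(T_i, S_i)/w(T_i), assume ŵ(x) := ∑_{x'∈T_i} w(x,x') > 0 for every x ∈ T_i, and let λ_{T_i} denote the second smallest eigenvalue of the Laplacian L_{T_i} := I − Ā_{T_i} of the restricted graph on T_i, where (Ā_{T_i})_{x,x'} := w(x,x')/√(ŵ(x)·ŵ(x')). Then for every integer t ≥ 1 there exists a vector Δ ∈ ℝ^{T_i} with ‖Δ‖₂² ≤ (1 − λ_{T_i}/2)^{2(t−1)}·w(T_i) such that for every x ∈ T_i, (((1/2)·I_N + (1/2)·Ā)^t g_i)_x ≥ (1/2)·(1−α)^t·ρ_i·√(w(x)) + Δ_x. -/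

import Mathlib

open Finset Matrix

/-- The degree `w(x) = ∑_{x'} w(x,x')` of a vertex in the positive-pair graph. -/
noncomputable def deg {N : ℕ} (w : Fin N → Fin N → ℝ) (x : Fin N) : ℝ := ∑ x', w x x'

/-- The normalized adjacency matrix `Ā` with entries `w(x,x')/√(w(x)w(x'))`. -/
noncomputable def nadj {N : ℕ} (w : Fin N → Fin N → ℝ) : Matrix (Fin N) (Fin N) ℝ :=
  Matrix.of fun x x' => w x x' / Real.sqrt (deg w x * deg w x')

/-- The vector with entry `√(w(x))` on a subset `A` and `0` elsewhere. -/
noncomputable def hvec {N : ℕ} (w : Fin N → Fin N → ℝ) (A : Finset (Fin N)) :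
    Fin N → ℝ :=
  fun x => if x ∈ A then Real.sqrt (deg w x) else 0

/-- The lazy random-walk matrix `(1/2)·I + (1/2)·Ā`. -/
noncomputable def lazyA {N : ℕ} (w : Fin N → Fin N → ℝ) : Matrix (Fin N) (Fin N) ℝ :=
  ((1 : ℝ) / 2) • (1 : Matrix (Fin N) (Fin N) ℝ) + ((1 : ℝ) / 2) • nadj w


/-- Entrywise nonnegativity and monotonicity of matrix powers applied to vectors. -/
lemma aux_pow_mulVec {n : Type*} [Fintype n] [DecidableEq n]
    (A A' : Matrix n n ℝ) (hA' : ∀ x y, 0 ≤ A' x y) (hle : ∀ x y, A' x y ≤ A x y)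
    (u : n → ℝ) (hu : ∀ x, 0 ≤ u x) (k : ℕ) :
    (∀ x, 0 ≤ (A'^k *ᵥ u) x) ∧ (∀ x, (A'^k *ᵥ u) x ≤ (A^k *ᵥ u) x) := by
  induction k with
  | zero => exact ⟨fun x => by simpa using hu x, fun x => by simp⟩
  | succ k ih =>
    obtain ⟨ih1, ih2⟩ := ih
    have hA : ∀ x y, 0 ≤ A x y := fun x y => le_trans (hA' x y) (hle x y)
    constructor
    · intro x
      rw [pow_succ', ← mulVec_mulVec]
      exact Finset.sum_nonneg fun y _ => mul_nonneg (hA' x y) (ih1 y)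
    · intro x
      rw [pow_succ', pow_succ', ← mulVec_mulVec, ← mulVec_mulVec]
      exact Finset.sum_le_sum fun y _ => mul_le_mul (hle x y) (ih2 y) (ih1 y) (hA x y)

/-- An orthonormal family of full cardinality is complete. -/
lemma aux_complete {K : ℕ} {ι : Type*} [Fintype ι] [DecidableEq ι]
    (hcard : Fintype.card ι = K) (u : Fin K → ι → ℝ)
    (horth : ∀ j j', (∑ x, u j x * u j' x) = if j = j' then (1:ℝ) else 0) :
    ∀ x y : ι, (∑ j, u j x * u j y) = if x = y then (1:ℝ) else 0 := by
  intro x y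
  have e : ι ≃ Fin K := Fintype.equivFinOfCardEq hcard
  set U : Matrix ι ι ℝ := Matrix.of fun a b => u (e a) b with hU
  have h1 : U * Uᵀ = 1 := by
    ext a b
    simp only [Matrix.mul_apply, Matrix.transpose_apply, Matrix.one_apply, hU, Matrix.of_apply]
    rw [horth (e a) (e b)]
    simp [e.apply_eq_iff_eq]
  have h2 : Uᵀ * U = 1 := mul_eq_one_comm.mp h1
  have h3 := congrFun (congrFun h2 x) y
  simp only [Matrix.mul_apply, Matrix.transpose_apply, Matrix.one_apply, hU, Matrix.of_apply] at h3
  have h4 : ∑ j, u j x * u j y = ∑ z : ι, u (e z) x * u (e z) y :=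
    (Equiv.sum_comp e (fun j => u j x * u j y)).symm
  rw [h4]
  exact h3

/-- Parseval for an orthonormal family. -/
lemma aux_parseval {K : ℕ} {ι : Type*} [Fintype ι]
    (u : Fin K → ι → ℝ)
    (horth : ∀ j j', (∑ x, u j x * u j' x) = if j = j' then (1:ℝ) else 0)
    (d : Fin K → ℝ) :
    ∑ x, (∑ j, d j * u j x)^2 = ∑ j, (d j)^2 := by
  have : ∀ x : ι, (∑ j, d j * u j x)^2 = ∑ j, ∑ j', (d j * d j') * (u j x * u j' x) := by
    intro x
    rw [sq, Finset.sum_mul_sum]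
    exact Finset.sum_congr rfl fun j _ => Finset.sum_congr rfl fun j' _ => by ring
  rw [Finset.sum_congr rfl fun x _ => this x, Finset.sum_comm]
  rw [Finset.sum_congr rfl fun j (_ : j ∈ univ) => Finset.sum_comm]
  have : ∀ j, ∑ j', ∑ x : ι, (d j * d j') * (u j x * u j' x) = (d j)^2 := by
    intro j
    have : ∀ j', ∑ x : ι, (d j * d j') * (u j x * u j' x)
        = (d j * d j') * (if j = j' then (1:ℝ) else 0) := by
      intro j'
      rw [← Finset.mul_sum, horth]
    rw [Finset.sum_congr rfl fun j' _ => this j']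
    simp [sq]
  exact Finset.sum_congr rfl fun j _ => this j

set_option maxHeartbeats 1000000 in
/-- Lower bound on the probability that a lazy random walk
started in `T_i` arrives in `S_i`. -/
theorem stmt12 {N m r : ℕ} (w : Fin N → Fin N → ℝ)
    (hsymm : ∀ x x', w x x' = w x' x)
    (hnonneg : ∀ x x', 0 ≤ w x x')
    (hsum : ∑ x, ∑ x', w x x' = 1)
    (hdeg : ∀ x, 0 < deg w x)
    (C : Fin m → Finset (Fin N))
    (hpart : ∀ x : Fin N, ∃! i : Fin m, x ∈ C i)
    (hne : ∀ i : Fin m, (C i).Nonempty)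
    (α : ℝ) (hα0 : 0 < α) (hα1 : α < 1)
    (hexp : ∀ i : Fin m, ∀ x ∈ C i, (∑ x' ∈ (C i)ᶜ, w x x') ≤ α * deg w x)
    (hrm : 2 * r ≤ m)
    (S T : Fin r → Finset (Fin N))
    (hS : ∀ i : Fin r, S i = C ⟨i.1, by have := i.isLt; omega⟩)
    (hT : ∀ i : Fin r, T i = C ⟨r + i.1, by have := i.isLt; omega⟩)
    (i : Fin r)
    -- restricted degrees on `T_i` are positive
    (hwhat : ∀ x ∈ T i, 0 < ∑ x' ∈ T i, w x x')
    (hcard : 2 ≤ (T i).card)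
    -- an orthonormal eigenbasis of the Laplacian `L_{T_i} = I − Ā_{T_i}` of the
    -- restricted graph on `T_i`, with eigenvalues in nondecreasing order
    (lam : Fin (T i).card → ℝ) (u : Fin (T i).card → ↥(T i) → ℝ)
    (horth : ∀ j j' : Fin (T i).card,
        (∑ x : ↥(T i), u j x * u j' x) = if j = j' then (1 : ℝ) else 0)
    (heig : ∀ j : Fin (T i).card,
        ((1 : Matrix ↥(T i) ↥(T i) ℝ) -
            Matrix.of fun x y : ↥(T i) => w x.1 y.1 /
              Real.sqrt ((∑ x' ∈ T i, w x.1 x') * (∑ x' ∈ T i, w y.1 x'))) *ᵥ u j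
          = lam j • u j)
    (hmono : Monotone lam) :
    ∀ t : ℕ, 1 ≤ t →
      ∃ Δ : ↥(T i) → ℝ,
        (∑ x : ↥(T i), Δ x ^ 2) ≤
          (1 - lam ⟨1, by omega⟩ / 2) ^ (2 * (t - 1)) * (∑ x ∈ T i, deg w x) ∧
        ∀ x : ↥(T i),
          (1 / 2) * (1 - α) ^ t *
              ((∑ x' ∈ T i, ∑ x'' ∈ S i, w x' x'') / (∑ x' ∈ T i, deg w x')) *
              Real.sqrt (deg w x.1) + Δ x ≤
            ((lazyA w ^ t) *ᵥ hvec w (S i)) x.1 := by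
  intro t ht
  obtain ⟨k, rfl⟩ : ∃ k, t = k + 1 := ⟨t - 1, by omega⟩
  have htsub : k + 1 - 1 = k := rfl
  have h1α : (0:ℝ) < 1 - α := by linarith
  have hne' : Nonempty ↥(T i) := Finset.Nonempty.to_subtype (Finset.card_pos.mp (by omega))
  -- basic positivity
  set wh : ↥(T i) → ℝ := fun x => ∑ x' ∈ T i, w x.1 x' with hwh
  have hwhpos : ∀ x : ↥(T i), 0 < wh x := fun x => hwhat x.1 x.2
  have hdegpos : ∀ x : Fin N, 0 < deg w x := hdeg
  have hdisj : ∀ x : Fin N, x ∈ T i → x ∉ S i := by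
    intro x hxT hxS
    rw [hT i] at hxT
    rw [hS i] at hxS
    obtain ⟨j, _, huniq⟩ := hpart x
    have h1 := huniq _ hxT
    have h2 := huniq _ hxS
    rw [← h2] at h1
    have : r + i.1 = i.1 := congrArg Fin.val h1
    have := i.isLt
    omega
  have hwh_le : ∀ x : ↥(T i), wh x ≤ deg w x.1 := by
    intro x
    exact Finset.sum_le_sum_of_subset_of_nonneg (Finset.subset_univ _)
      (fun y _ _ => hnonneg x.1 y)
  have hwh_ge : ∀ x : ↥(T i), (1 - α) * deg w x.1 ≤ wh x := by
    have key : ∀ z ∈ T i, (1 - α) * deg w z ≤ ∑ x' ∈ T i, w z x' := by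
      intro z hz
      have hz' : z ∈ C ⟨r + i.1, by have := i.isLt; omega⟩ := by rw [← hT i]; exact hz
      have h1 := hexp _ _ hz'
      have h2 := Finset.sum_add_sum_compl (C ⟨r + i.1, by have := i.isLt; omega⟩) (w z)
      rw [← hT i] at h1 h2
      have hd : deg w z = ∑ x', w z x' := rfl
      rw [hd] at h1 ⊢
      linarith
    exact fun x => key x.1 x.2
  -- matrices
  set AT : Matrix ↥(T i) ↥(T i) ℝ := Matrix.of fun x y : ↥(T i) => w x.1 y.1 /
      Real.sqrt ((∑ x' ∈ T i, w x.1 x') * (∑ x' ∈ T i, w y.1 x')) with hAT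
  have heig' : ∀ j, ((1 : Matrix ↥(T i) ↥(T i) ℝ) - AT) *ᵥ u j = lam j • u j := heig
  have hATentry : ∀ x y : ↥(T i), AT x y = w x.1 y.1 / (Real.sqrt (wh x) * Real.sqrt (wh y)) := by
    intro x y
    rw [hAT]
    simp only [Matrix.of_apply]
    rw [Real.sqrt_mul (le_of_lt (hwhpos x))]
  have hATnn : ∀ x y : ↥(T i), 0 ≤ AT x y := by
    intro x y
    rw [hATentry]
    exact div_nonneg (hnonneg _ _) (mul_nonneg (Real.sqrt_nonneg _) (Real.sqrt_nonneg _))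
  set MT : Matrix ↥(T i) ↥(T i) ℝ :=
    ((1:ℝ)/2) • (1 : Matrix ↥(T i) ↥(T i) ℝ) + ((1:ℝ)/2) • AT with hMT
  set B : Matrix ↥(T i) ↥(T i) ℝ := Matrix.of fun x y : ↥(T i) => lazyA w x.1 y.1 with hB
  set g : Fin N → ℝ := hvec w (S i) with hg
  have hgnn : ∀ x, 0 ≤ g x := by
    intro x
    rw [hg, hvec]
    split <;> [exact Real.sqrt_nonneg _; exact le_refl 0]
  have hlazynn : ∀ x y : Fin N, 0 ≤ lazyA w x y := by
    intro x y
    have h1 : 0 ≤ nadj w x y := div_nonneg (hnonneg _ _) (Real.sqrt_nonneg _)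
    simp only [lazyA, Matrix.add_apply, Matrix.smul_apply, Matrix.one_apply, smul_eq_mul]
    split <;> nlinarith
  have hMTnn : ∀ x y : ↥(T i), 0 ≤ MT x y := by
    intro x y
    have := hATnn x y
    simp only [hMT, Matrix.add_apply, Matrix.smul_apply, Matrix.one_apply, smul_eq_mul]
    split <;> nlinarith
  set φ : ↥(T i) → ℝ := fun x => (lazyA w *ᵥ g) x.1 with hφ
  set v : ↥(T i) → ℝ := fun x => Real.sqrt (wh x) with hv
  -- step values
  have hφval : ∀ x : ↥(T i), φ x = (∑ x' ∈ S i, w x.1 x') / (2 * Real.sqrt (deg w x.1)) := by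
    intro x
    have hx : x.1 ∉ S i := hdisj x.1 x.2
    have hgx : g x.1 = 0 := by rw [hg]; simp [hvec, hx]
    have hsx : Real.sqrt (deg w x.1) ≠ 0 := ne_of_gt (Real.sqrt_pos.mpr (hdeg x.1))
    have hmv : (nadj w *ᵥ g) x.1 = ∑ y ∈ S i, w x.1 y / Real.sqrt (deg w x.1) := by
      have e1 : (nadj w *ᵥ g) x.1 = ∑ y, nadj w x.1 y * g y := rfl
      rw [e1]
      have e2 : ∀ y, nadj w x.1 y * g y =
          if y ∈ S i then w x.1 y / Real.sqrt (deg w x.1) else 0 := by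
        intro y
        rw [hg]
        simp only [hvec]
        split
        · have hsy : Real.sqrt (deg w y) ≠ 0 := ne_of_gt (Real.sqrt_pos.mpr (hdeg y))
          show w x.1 y / Real.sqrt (deg w x.1 * deg w y) * Real.sqrt (deg w y) = _
          rw [Real.sqrt_mul (hdeg x.1).le]
          field_simp
        · exact mul_zero _
      rw [Finset.sum_congr rfl fun y _ => e2 y, Finset.sum_ite_mem, Finset.univ_inter]
    have e0 : φ x = ((1:ℝ)/2) * g x.1 + ((1:ℝ)/2) * (nadj w *ᵥ g) x.1 := by
      show (lazyA w *ᵥ g) x.1 = _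
      rw [lazyA, add_mulVec, smul_mulVec, smul_mulVec, one_mulVec]
      simp
    rw [e0, hgx, hmv, ← Finset.sum_div]
    ring
  have hφnn : ∀ x : ↥(T i), 0 ≤ φ x := by
    intro x
    rw [hφval]
    exact div_nonneg (Finset.sum_nonneg fun y _ => hnonneg _ _)
      (by positivity)
  -- comparison of matrices
  have hnadj : ∀ x y : Fin N, nadj w x y =
      w x y / (Real.sqrt (deg w x) * Real.sqrt (deg w y)) := by
    intro x y
    show w x y / Real.sqrt (deg w x * deg w y) = _
    rw [Real.sqrt_mul (hdeg x).le]
  have hsge : ∀ x : ↥(T i), Real.sqrt (1-α) * Real.sqrt (deg w x.1) ≤ Real.sqrt (wh x) := by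
    intro x
    rw [← Real.sqrt_mul h1α.le]
    exact Real.sqrt_le_sqrt (hwh_ge x)
  have hcmp : ∀ x y : ↥(T i), ((1-α) • MT) x y ≤ B x y := by
    intro x y
    have hkey : (1-α) * AT x y ≤ nadj w x.1 y.1 := by
      have hp1 : (0:ℝ) < Real.sqrt (wh x) * Real.sqrt (wh y) :=
        mul_pos (Real.sqrt_pos.mpr (hwhpos x)) (Real.sqrt_pos.mpr (hwhpos y))
      have hp2 : (0:ℝ) < Real.sqrt (deg w x.1) * Real.sqrt (deg w y.1) :=
        mul_pos (Real.sqrt_pos.mpr (hdeg x.1)) (Real.sqrt_pos.mpr (hdeg y.1))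
      rw [hATentry, hnadj, mul_div_assoc']
      rw [div_le_div_iff₀ hp1 hp2]
      have h2 : (1-α) * (Real.sqrt (deg w x.1) * Real.sqrt (deg w y.1)) ≤
          Real.sqrt (wh x) * Real.sqrt (wh y) :=
        calc (1-α) * (Real.sqrt (deg w x.1) * Real.sqrt (deg w y.1))
            = (Real.sqrt (1-α) * Real.sqrt (deg w x.1)) *
              (Real.sqrt (1-α) * Real.sqrt (deg w y.1)) := by
              have e : Real.sqrt (1-α) * Real.sqrt (1-α) = 1-α := Real.mul_self_sqrt h1α.le
              linear_combination (-(Real.sqrt (deg w x.1) * Real.sqrt (deg w y.1))) * e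
          _ ≤ Real.sqrt (wh x) * Real.sqrt (wh y) :=
              mul_le_mul (hsge x) (hsge y) (by positivity) (Real.sqrt_nonneg _)
      nlinarith [hnonneg x.1 y.1, mul_le_mul_of_nonneg_left h2 (hnonneg x.1 y.1)]
    have hBxy : B x y = 1/2 * (if x.1 = y.1 then (1:ℝ) else 0) + 1/2 * nadj w x.1 y.1 := by
      show lazyA w x.1 y.1 = _
      simp [lazyA, Matrix.add_apply, Matrix.smul_apply, Matrix.one_apply, smul_eq_mul]
    have hMTxy : MT x y = 1/2 * (if x = y then (1:ℝ) else 0) + 1/2 * AT x y := by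
      simp [hMT, Matrix.add_apply, Matrix.smul_apply, Matrix.one_apply, smul_eq_mul]
    rw [Matrix.smul_apply, smul_eq_mul, hMTxy, hBxy]
    by_cases hxy : x = y
    · subst hxy
      rw [if_pos rfl, if_pos rfl]
      have := hATnn x x
      linarith
    · have : ¬ (x.1 = y.1) := fun h => hxy (Subtype.ext h)
      simp only [if_neg hxy, if_neg this]
      linarith
  -- restriction step
  have hBnn : ∀ x y : ↥(T i), 0 ≤ B x y := fun x y => hlazynn x.1 y.1
  have hmvap : ∀ {n : Type} [Fintype n] (M : Matrix n n ℝ) (vv : n → ℝ) (x : n),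
      (M *ᵥ vv) x = ∑ y, M x y * vv y := fun M vv x => rfl
  have hhnn : ∀ x, 0 ≤ (lazyA w *ᵥ g) x := by
    intro x
    rw [hmvap]
    exact Finset.sum_nonneg fun y _ => mul_nonneg (hlazynn x y) (hgnn y)
  have hlz : ∀ n : ℕ, ∀ x : Fin N, 0 ≤ ((lazyA w)^n *ᵥ (lazyA w *ᵥ g)) x :=
    fun n => (aux_pow_mulVec (lazyA w) (lazyA w) hlazynn (fun _ _ => le_refl _) _ hhnn n).1
  have hrest : ∀ x : ↥(T i), (B^k *ᵥ φ) x ≤ ((lazyA w)^(k+1) *ᵥ g) x.1 := by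
    have key : ∀ n : ℕ, (∀ x : ↥(T i), 0 ≤ (B^n *ᵥ φ) x) ∧
        (∀ x : ↥(T i), (B^n *ᵥ φ) x ≤ ((lazyA w)^n *ᵥ (lazyA w *ᵥ g)) x.1) := by
      intro n
      induction n with
      | zero =>
        constructor
        · intro x; simpa [Matrix.one_mulVec] using hφnn x
        · intro x; simp [Matrix.one_mulVec]; exact le_rfl
      | succ n ih =>
        obtain ⟨ih1, ih2⟩ := ih
        constructor
        · intro x
          rw [pow_succ', ← mulVec_mulVec]
          exact Finset.sum_nonneg fun y _ => mul_nonneg (hBnn x y) (ih1 y)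
        · intro x
          rw [pow_succ', ← mulVec_mulVec]
          calc (B *ᵥ (B^n *ᵥ φ)) x
              = ∑ y : ↥(T i), B x y * (B^n *ᵥ φ) y := hmvap _ _ _
            _ ≤ ∑ y : ↥(T i), lazyA w x.1 y.1 * (((lazyA w)^n *ᵥ (lazyA w *ᵥ g)) y.1) := by
                refine Finset.sum_le_sum fun y _ => ?_
                exact mul_le_mul (le_of_eq rfl) (ih2 y) (ih1 y) (hlazynn x.1 y.1)
            _ = ∑ y ∈ T i, lazyA w x.1 y * (((lazyA w)^n *ᵥ (lazyA w *ᵥ g)) y) :=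
                Finset.sum_coe_sort (T i)
                  (fun y => lazyA w x.1 y * (((lazyA w)^n *ᵥ (lazyA w *ᵥ g)) y))
            _ ≤ ∑ y, lazyA w x.1 y * (((lazyA w)^n *ᵥ (lazyA w *ᵥ g)) y) :=
                Finset.sum_le_sum_of_subset_of_nonneg (Finset.subset_univ _)
                  (fun y _ _ => mul_nonneg (hlazynn x.1 y) (hlz n y))
            _ = (lazyA w *ᵥ ((lazyA w)^n *ᵥ (lazyA w *ᵥ g))) x.1 := (hmvap _ _ _).symm
            _ = ((lazyA w)^(n+1) *ᵥ (lazyA w *ᵥ g)) x.1 := by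
                rw [pow_succ', ← mulVec_mulVec]
    intro x
    have h := (key k).2 x
    have e : ((lazyA w)^(k+1) *ᵥ g) x.1 = ((lazyA w)^k *ᵥ (lazyA w *ᵥ g)) x.1 := by
      rw [pow_succ, ← mulVec_mulVec]
    rw [e]
    exact h
  -- comparison step
  have hBφ : ∀ x : ↥(T i), (1-α)^k * (MT^k *ᵥ φ) x ≤ (B^k *ᵥ φ) x := by
    intro x
    have h1 := (aux_pow_mulVec B ((1-α) • MT)
      (fun x y => by rw [Matrix.smul_apply, smul_eq_mul]; exact mul_nonneg h1α.le (hMTnn x y))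
      hcmp φ hφnn k).2 x
    rw [smul_pow, smul_mulVec] at h1
    simpa using h1
  -- eigen step
  have hMTu : ∀ j, MT *ᵥ u j = (1 - lam j / 2) • u j := by
    intro j
    have h := heig' j
    rw [sub_mulVec, one_mulVec] at h
    ext x
    have hx := congrFun h x
    simp only [Pi.sub_apply, Pi.smul_apply, smul_eq_mul] at hx
    have e : (MT *ᵥ u j) x = 1/2 * u j x + 1/2 * ((AT *ᵥ u j) x) := by
      rw [hMT, add_mulVec, smul_mulVec, smul_mulVec, one_mulVec]
      simp
    rw [e]
    simp only [Pi.smul_apply, smul_eq_mul]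
    linarith
  -- expansion
  set c : Fin (T i).card → ℝ := fun j => ∑ x, φ x * u j x with hc
  have hcomplete := aux_complete (Fintype.card_coe (T i)) u horth
  have hexpand : ∀ f : ↥(T i) → ℝ, ∀ x : ↥(T i), f x = ∑ j, (∑ y, f y * u j y) * u j x := by
    intro f x
    symm
    have e1 : ∀ j, (∑ y, f y * u j y) * u j x = ∑ y, f y * (u j y * u j x) := by
      intro j
      rw [Finset.sum_mul]
      exact Finset.sum_congr rfl fun y _ => by ring
    rw [Finset.sum_congr rfl fun j _ => e1 j, Finset.sum_comm]
    have e2 : ∀ y, (∑ j, f y * (u j y * u j x)) = f y * (if y = x then 1 else 0) := by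
      intro y
      rw [← Finset.mul_sum, hcomplete y x]
    rw [Finset.sum_congr rfl fun y _ => e2 y]
    simp only [mul_ite, mul_one, mul_zero]
    rw [Finset.sum_ite_eq' Finset.univ x f]
    simp
  have hcj : ∀ j, c j = ∑ y, φ y * u j y := fun j => rfl
  have hspec : ∀ n : ℕ, ∀ x : ↥(T i),
      (MT^n *ᵥ φ) x = ∑ j, c j * (1 - lam j / 2)^n * u j x := by
    intro n
    induction n with
    | zero =>
      intro x
      simp only [pow_zero, Matrix.one_mulVec, mul_one]
      rw [Finset.sum_congr rfl fun j (_ : j ∈ Finset.univ) => by rw [hcj j]]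
      exact hexpand φ x
    | succ n ih =>
      intro x
      rw [pow_succ', ← mulVec_mulVec]
      have e0 : (MT *ᵥ (MT^n *ᵥ φ)) x = ∑ y, MT x y * (MT^n *ᵥ φ) y := rfl
      rw [e0]
      calc ∑ y, MT x y * (MT^n *ᵥ φ) y
          = ∑ y, ∑ j, (c j * (1 - lam j / 2)^n) * (MT x y * u j y) := by
            refine Finset.sum_congr rfl fun y _ => ?_
            rw [ih y, Finset.mul_sum]
            exact Finset.sum_congr rfl fun j _ => by ring
        _ = ∑ j, (c j * (1 - lam j / 2)^n) * (∑ y, MT x y * u j y) := by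
            rw [Finset.sum_comm]
            exact Finset.sum_congr rfl fun j _ => by rw [← Finset.mul_sum]
        _ = ∑ j, c j * (1 - lam j / 2)^(n+1) * u j x := by
            refine Finset.sum_congr rfl fun j _ => ?_
            have e1 : (∑ y, MT x y * u j y) = (MT *ᵥ u j) x := rfl
            rw [e1, hMTu j]
            simp only [Pi.smul_apply, smul_eq_mul]
            ring
  -- spectral bounds
  have hrow : ∀ x : ↥(T i), ∑ y : ↥(T i), w x.1 y.1 = wh x :=
    fun x => Finset.sum_coe_sort (T i) (fun y => w x.1 y)
  have hcol : ∀ y : ↥(T i), ∑ x : ↥(T i), w x.1 y.1 = wh y := by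
    intro y
    rw [Finset.sum_congr rfl fun x (_ : x ∈ Finset.univ) => hsymm x.1 y.1]
    exact hrow y
  have hlam_eq : ∀ j, lam j = 1 - ∑ x, ∑ y, AT x y * (u j x * u j y) := by
    intro j
    have h := heig' j
    have h2 : ∑ x, u j x * (((1 - AT) *ᵥ u j) x) = lam j := by
      rw [h]
      have : ∀ x, u j x * ((lam j • u j) x) = lam j * (u j x * u j x) := by
        intro x; simp only [Pi.smul_apply, smul_eq_mul]; ring
      rw [Finset.sum_congr rfl fun x _ => this x, ← Finset.mul_sum, horth j j]
      simp
    rw [← h2]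
    rw [sub_mulVec, one_mulVec]
    have : ∀ x, u j x * ((u j - AT *ᵥ u j) x)
        = u j x * u j x - ∑ y, AT x y * (u j x * u j y) := by
      intro x
      simp only [Pi.sub_apply]
      rw [hmvap, mul_sub, Finset.mul_sum]
      congr 1
      exact Finset.sum_congr rfl fun y _ => by ring
    rw [Finset.sum_congr rfl fun x _ => this x, Finset.sum_sub_distrib, horth j j]
    simp
  have hquadbdd : ∀ j, -1 ≤ ∑ x, ∑ y, AT x y * (u j x * u j y) := by
    intro j
    set f : ↥(T i) → ℝ := fun x => u j x / Real.sqrt (wh x) with hf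
    have hfid : ∀ x y : ↥(T i), AT x y * (u j x * u j y) = w x.1 y.1 * (f x * f y) := by
      intro x y
      have hx : Real.sqrt (wh x) ≠ 0 := ne_of_gt (Real.sqrt_pos.mpr (hwhpos x))
      have hy : Real.sqrt (wh y) ≠ 0 := ne_of_gt (Real.sqrt_pos.mpr (hwhpos y))
      rw [hATentry, hf]
      field_simp
    have hf2 : ∀ x : ↥(T i), wh x * f x ^ 2 = u j x ^ 2 := by
      intro x
      have hx : Real.sqrt (wh x) ≠ 0 := ne_of_gt (Real.sqrt_pos.mpr (hwhpos x))
      have hs : Real.sqrt (wh x) ^ 2 = wh x := Real.sq_sqrt (hwhpos x).le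
      rw [hf]
      field_simp
      rw [hs]
      ring
    have hpos : (0:ℝ) ≤ ∑ x : ↥(T i), ∑ y : ↥(T i), w x.1 y.1 * (f x + f y)^2 :=
      Finset.sum_nonneg fun x _ => Finset.sum_nonneg fun y _ =>
        mul_nonneg (hnonneg _ _) (sq_nonneg _)
    have hexpsq : ∑ x : ↥(T i), ∑ y : ↥(T i), w x.1 y.1 * (f x + f y)^2
        = 2 * (∑ x, u j x ^ 2) + 2 * (∑ x, ∑ y, AT x y * (u j x * u j y)) := by
      have e1 : ∀ x y : ↥(T i), w x.1 y.1 * (f x + f y)^2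
          = w x.1 y.1 * f x ^ 2 + w x.1 y.1 * f y ^ 2 + 2 * (AT x y * (u j x * u j y)) := by
        intro x y
        rw [hfid]
        ring
      rw [Finset.sum_congr rfl fun x _ => Finset.sum_congr rfl fun y _ => e1 x y]
      rw [Finset.sum_congr rfl fun x (_ : x ∈ Finset.univ) => Finset.sum_add_distrib]
      rw [Finset.sum_congr rfl fun x (_ : x ∈ Finset.univ) =>
        (congrArg (· + ∑ y, 2 * (AT x y * (u j x * u j y))) Finset.sum_add_distrib)]
      rw [Finset.sum_add_distrib, Finset.sum_add_distrib]
      have e2 : ∑ x : ↥(T i), ∑ y : ↥(T i), w x.1 y.1 * f x ^ 2 = ∑ x, u j x ^ 2 := by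
        refine Finset.sum_congr rfl fun x _ => ?_
        rw [← Finset.sum_mul, hrow, hf2]
      have e3 : ∑ x : ↥(T i), ∑ y : ↥(T i), w x.1 y.1 * f y ^ 2 = ∑ x, u j x ^ 2 := by
        rw [Finset.sum_comm]
        refine Finset.sum_congr rfl fun y _ => ?_
        rw [← Finset.sum_mul, hcol, hf2]
      have e4 : ∑ x : ↥(T i), ∑ y : ↥(T i), 2 * (AT x y * (u j x * u j y))
          = 2 * ∑ x, ∑ y, AT x y * (u j x * u j y) := by
        rw [Finset.mul_sum]
        exact Finset.sum_congr rfl fun x _ => by rw [Finset.mul_sum]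
      rw [e2, e3, e4]
      ring
    have hn1 : ∑ x : ↥(T i), u j x ^ 2 = 1 := by
      have h := horth j j
      rw [if_pos rfl] at h
      rw [← h]
      exact Finset.sum_congr rfl fun x _ => by ring
    rw [hexpsq, hn1] at hpos
    linarith
  have hlam_le2 : ∀ j, lam j ≤ 2 := by
    intro j
    have := hquadbdd j
    rw [hlam_eq j]
    linarith
  set j0 : Fin (T i).card := ⟨0, by omega⟩ with hj0
  set j1 : Fin (T i).card := ⟨1, by omega⟩ with hj1
  set wT : ℝ := ∑ x ∈ T i, deg w x with hwT
  set wTS : ℝ := ∑ x' ∈ T i, ∑ x'' ∈ S i, w x' x'' with hwTS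
  have hwTpos : 0 < wT := by
    rw [hwT]
    exact Finset.sum_pos (fun x _ => hdeg x) (Finset.card_pos.mp (by omega))
  have hwTSnn : 0 ≤ wTS :=
    Finset.sum_nonneg fun x _ => Finset.sum_nonneg fun y _ => hnonneg _ _
  have hwTS_le : wTS ≤ wT := by
    rw [hwTS, hwT]
    refine Finset.sum_le_sum fun x _ => ?_
    exact Finset.sum_le_sum_of_subset_of_nonneg (Finset.subset_univ _)
      (fun y _ _ => hnonneg x y)
  have hφsq : ∑ x : ↥(T i), φ x ^ 2 ≤ wT := by
    have step : ∀ x : ↥(T i), φ x ^ 2 ≤ deg w x.1 := by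
      intro x
      rw [hφval]
      have hd := hdeg x.1
      have hsd : Real.sqrt (deg w x.1) ^ 2 = deg w x.1 := Real.sq_sqrt hd.le
      have hwle : ∑ x' ∈ S i, w x.1 x' ≤ deg w x.1 :=
        Finset.sum_le_sum_of_subset_of_nonneg (Finset.subset_univ _)
          (fun y _ _ => hnonneg x.1 y)
      have hwnn : 0 ≤ ∑ x' ∈ S i, w x.1 x' :=
        Finset.sum_nonneg fun y _ => hnonneg x.1 y
      rw [div_pow, mul_pow, hsd]
      rw [div_le_iff₀ (by positivity)]
      nlinarith
    calc ∑ x : ↥(T i), φ x ^ 2 ≤ ∑ x : ↥(T i), deg w x.1 :=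
          Finset.sum_le_sum fun x _ => step x
      _ = wT := Finset.sum_coe_sort (T i) (deg w)
  have hlazy_nonneg : ∀ x : ↥(T i), 0 ≤ ((lazyA w)^(k+1) *ᵥ g) x.1 := by
    intro x
    exact (aux_pow_mulVec (lazyA w) (lazyA w) hlazynn (fun _ _ => le_refl _) g hgnn (k+1)).1 x.1
  rcases le_or_gt (lam j1) 0 with hl1 | hl1
  · -- easy case
    refine ⟨fun x => -((1/2) * (1-α)^(k+1) * (wTS / wT) * Real.sqrt (deg w x.1)), ?_, ?_⟩
    · simp only [htsub]
      have hcoef : (0:ℝ) ≤ (1/2) * (1-α)^(k+1) * (wTS / wT) ∧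
          (1/2) * (1-α)^(k+1) * (wTS / wT) ≤ 1 := by
        constructor
        · positivity
        · have h1 : (1-α)^(k+1) ≤ 1 := pow_le_one₀ h1α.le (by linarith)
          have h2 : wTS / wT ≤ 1 := (div_le_one hwTpos).mpr hwTS_le
          have h3 : (0:ℝ) ≤ wTS / wT := div_nonneg hwTSnn hwTpos.le
          nlinarith [pow_nonneg h1α.le (k+1)]
      have e : ∀ x : ↥(T i), (-((1/2) * (1-α)^(k+1) * (wTS / wT) * Real.sqrt (deg w x.1)))^2
          = ((1/2) * (1-α)^(k+1) * (wTS / wT))^2 * deg w x.1 := by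
        intro x
        rw [neg_sq, mul_pow, Real.sq_sqrt (hdeg x.1).le]
      rw [Finset.sum_congr rfl fun x _ => e x, ← Finset.mul_sum]
      have e2 : ∑ x : ↥(T i), deg w x.1 = wT := Finset.sum_coe_sort (T i) (deg w)
      rw [e2]
      have hb : (1:ℝ) ≤ (1 - lam j1 / 2) ^ (2*k) := by
        apply one_le_pow₀
        linarith
      have hsq1 : ((1/2) * (1-α)^(k+1) * (wTS / wT))^2 ≤ 1 := by
        nlinarith [hcoef.1, hcoef.2]
      nlinarith [hwTpos]
    · intro x
      simp only [htsub]
      have := hlazy_nonneg x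
      linarith
  · -- hard case
    have hvpos : ∀ x : ↥(T i), 0 < v x := fun x => Real.sqrt_pos.mpr (hwhpos x)
    have husq : ∀ j, ∑ x, u j x ^ 2 = 1 := by
      intro j
      have h := horth j j
      rw [if_pos rfl] at h
      rw [← h]
      exact Finset.sum_congr rfl fun x _ => by ring
    -- L v = 0
    have hLv : ((1 : Matrix ↥(T i) ↥(T i) ℝ) - AT) *ᵥ v = 0 := by
      ext x
      rw [sub_mulVec, one_mulVec]
      simp only [Pi.sub_apply, Pi.zero_apply]
      rw [hmvap]
      have e : ∀ y : ↥(T i), AT x y * v y = w x.1 y.1 / Real.sqrt (wh x) := by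
        intro y
        have hy : Real.sqrt (wh y) ≠ 0 := ne_of_gt (Real.sqrt_pos.mpr (hwhpos y))
        have hx' : Real.sqrt (wh x) ≠ 0 := ne_of_gt (Real.sqrt_pos.mpr (hwhpos x))
        rw [hATentry]
        have hvy : v y = Real.sqrt (wh y) := rfl
        rw [hvy]
        field_simp
        try ring
      rw [Finset.sum_congr rfl fun y _ => e y, ← Finset.sum_div, hrow, Real.div_sqrt]
      have hvx : v x = Real.sqrt (wh x) := rfl
      rw [hvx, sub_self]
    -- orthogonality of v to higher eigenvectors
    have hsymAT : ∀ x y : ↥(T i), AT x y = AT y x := by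
      intro x y
      rw [hATentry, hATentry, hsymm x.1 y.1, mul_comm]
    have hvu : ∀ j, j ≠ j0 → ∑ x, v x * u j x = 0 := by
      intro j hj
      have hlj : 0 < lam j := by
        have hj0v : (j0 : ℕ) = 0 := rfl
        have hj1v : (j1 : ℕ) = 1 := rfl
        have h1 : j1 ≤ j := by
          have hv : (1:ℕ) ≤ j.1 := by
            by_contra hc
            push_neg at hc
            exact hj (Fin.ext (by rw [hj0v]; omega))
          rw [Fin.le_def, hj1v]
          exact hv
        exact lt_of_lt_of_le hl1 (hmono h1)
      have h1 : ∑ x, v x * (((1 - AT) *ᵥ u j) x) = lam j * ∑ x, v x * u j x := by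
        rw [heig' j]
        rw [Finset.sum_congr rfl fun x (_ : x ∈ Finset.univ) =>
          (by simp only [Pi.smul_apply, smul_eq_mul]; ring :
            v x * ((lam j • u j) x) = lam j * (v x * u j x))]
        rw [← Finset.mul_sum]
      have h2 : ∑ x, v x * (((1 - AT) *ᵥ u j) x) = ∑ x, (((1 - AT) *ᵥ v) x) * u j x := by
        have eL : ∀ (f h : ↥(T i) → ℝ), ∑ x, f x * (((1 - AT) *ᵥ h) x)
            = ∑ x, f x * h x - ∑ x, ∑ y, AT x y * (f x * h y) := by
          intro f h
          have e1 : ∀ x, f x * (((1 - AT) *ᵥ h) x)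
              = f x * h x - ∑ y, AT x y * (f x * h y) := by
            intro x
            rw [sub_mulVec, one_mulVec]
            simp only [Pi.sub_apply]
            rw [hmvap, mul_sub, Finset.mul_sum]
            congr 1
            exact Finset.sum_congr rfl fun y _ => by ring
          rw [Finset.sum_congr rfl fun x _ => e1 x, Finset.sum_sub_distrib]
        rw [eL v (u j)]
        have e2 : ∑ x, (((1 - AT) *ᵥ v) x) * u j x = ∑ x, u j x * (((1 - AT) *ᵥ v) x) := by
          exact Finset.sum_congr rfl fun x _ => by ring
        rw [e2, eL (u j) v]
        have e3 : ∑ x, v x * u j x = ∑ x, u j x * v x :=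
          Finset.sum_congr rfl fun x _ => by ring
        have e4 : ∑ x : ↥(T i), ∑ y : ↥(T i), AT x y * (v x * u j y)
            = ∑ x : ↥(T i), ∑ y : ↥(T i), AT x y * (u j x * v y) := by
          rw [Finset.sum_comm]
          refine Finset.sum_congr rfl fun x _ => Finset.sum_congr rfl fun y _ => ?_
          rw [hsymAT x y]
          ring
        rw [e3, e4]
      rw [hLv] at h2
      simp only [Pi.zero_apply, zero_mul, Finset.sum_const_zero] at h2
      rw [h2] at h1
      exact (mul_eq_zero.mp h1.symm).resolve_left (ne_of_gt hlj)
    -- v is proportional to u j0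
    set cv : ℝ := ∑ y, v y * u j0 y with hcv
    have hvexp : ∀ x, v x = cv * u j0 x := by
      intro x
      rw [hexpand v x]
      rw [Finset.sum_eq_single j0 (fun j _ hj => by rw [hvu j hj, zero_mul])
        (fun h => absurd (Finset.mem_univ j0) h)]
    have hvsq : ∑ x, v x ^ 2 = cv ^ 2 := by
      have e : ∀ x : ↥(T i), v x ^ 2 = cv^2 * u j0 x ^ 2 := by
        intro x
        rw [hvexp x]
        ring
      rw [Finset.sum_congr rfl fun x _ => e x, ← Finset.mul_sum, husq j0, mul_one]
    have hvsqpos : 0 < ∑ x, v x ^ 2 :=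
      Finset.sum_pos (fun x _ => pow_pos (hvpos x) 2) Finset.univ_nonempty
    have hcvne : cv ≠ 0 := by
      have hpos : 0 < cv ^ 2 := by rw [← hvsq]; exact hvsqpos
      intro h
      rw [h] at hpos
      norm_num at hpos
    -- lam j0 = 0
    have hlamj0 : lam j0 = 0 := by
      obtain ⟨x0, hx0⟩ : ∃ x0, u j0 x0 ≠ 0 := by
        by_contra hc
        push_neg at hc
        have : ∑ x, u j0 x ^ 2 = 0 :=
          Finset.sum_eq_zero fun x _ => by rw [hc x]; ring
        rw [husq j0] at this
        linarith
      have hveq : v = cv • u j0 := funext fun x => by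
        rw [hvexp x]; simp [Pi.smul_apply, smul_eq_mul]
      have h := hLv
      rw [hveq, Matrix.mulVec_smul, heig' j0] at h
      have hx := congrFun h x0
      simp only [Pi.smul_apply, smul_eq_mul, Pi.zero_apply] at hx
      rcases mul_eq_zero.mp hx with h' | h'
      · exact absurd h' hcvne
      · exact (mul_eq_zero.mp h').resolve_right hx0
    -- lower bound on ⟨φ, v⟩
    have hφv : Real.sqrt (1-α) / 2 * wTS ≤ ∑ x, φ x * v x := by
      have step : ∀ x : ↥(T i), Real.sqrt (1-α) / 2 * (∑ x' ∈ S i, w x.1 x') ≤ φ x * v x := by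
        intro x
        have hsd : Real.sqrt (deg w x.1) ≠ 0 := ne_of_gt (Real.sqrt_pos.mpr (hdeg x.1))
        have h1 : Real.sqrt (1-α) * Real.sqrt (deg w x.1) ≤ v x := hsge x
        have h2 : φ x * (Real.sqrt (1-α) * Real.sqrt (deg w x.1)) ≤ φ x * v x :=
          mul_le_mul_of_nonneg_left h1 (hφnn x)
        have h3 : φ x * (Real.sqrt (1-α) * Real.sqrt (deg w x.1))
            = Real.sqrt (1-α) / 2 * (∑ x' ∈ S i, w x.1 x') := by
          rw [hφval x]
          field_simp
        linarith
      calc Real.sqrt (1-α) / 2 * wTS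
          = ∑ x : ↥(T i), Real.sqrt (1-α) / 2 * (∑ x' ∈ S i, w x.1 x') := by
            rw [← Finset.mul_sum]
            congr 1
            exact (Finset.sum_coe_sort (T i) (fun x => ∑ x' ∈ S i, w x x')).symm
        _ ≤ ∑ x, φ x * v x := Finset.sum_le_sum fun x _ => step x
    have hφvnn : 0 ≤ ∑ x, φ x * v x := by
      refine Finset.sum_nonneg fun x _ => mul_nonneg (hφnn x) (hvpos x).le
    have hvsq_le : ∑ x, v x ^ 2 ≤ wT := by
      have e : ∀ x : ↥(T i), v x ^ 2 = wh x := fun x => Real.sq_sqrt (hwhpos x).le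
      rw [Finset.sum_congr rfl fun x _ => e x]
      calc ∑ x : ↥(T i), wh x ≤ ∑ x : ↥(T i), deg w x.1 :=
            Finset.sum_le_sum fun x _ => hwh_le x
        _ = wT := Finset.sum_coe_sort (T i) (deg w)
    -- the main pointwise bound
    have hmain : ∀ x : ↥(T i),
        (1/2) * (1-α) * (wTS/wT) * Real.sqrt (deg w x.1) ≤ c j0 * u j0 x := by
      intro x
      have hu0x : u j0 x = v x / cv := by
        rw [hvexp x]
        field_simp
      have hcj0 : c j0 = (∑ y, φ y * v y) / cv := by
        rw [hcj j0, Finset.sum_div]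
        refine Finset.sum_congr rfl fun y _ => ?_
        rw [hvexp y, eq_div_iff hcvne]
        ring
      have heq : c j0 * u j0 x = (∑ y, φ y * v y) * v x / (∑ y, v y ^ 2) := by
        rw [hcj0, hu0x, hvsq, div_mul_div_comm, sq]
      rw [heq]
      have hnum : (Real.sqrt (1-α) / 2 * wTS) * (Real.sqrt (1-α) * Real.sqrt (deg w x.1))
          ≤ (∑ y, φ y * v y) * v x :=
        mul_le_mul hφv (hsge x) (by positivity) hφvnn
      have hnum2 : (Real.sqrt (1-α) / 2 * wTS) * (Real.sqrt (1-α) * Real.sqrt (deg w x.1))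
          = (1-α)/2 * wTS * Real.sqrt (deg w x.1) := by
        have e := Real.mul_self_sqrt h1α.le
        linear_combination (wTS * Real.sqrt (deg w x.1) / 2) * e
      have hnum3 : (1-α)/2 * wTS * Real.sqrt (deg w x.1) ≤ (∑ y, φ y * v y) * v x := by
        rw [← hnum2]
        exact hnum
      have hstep : (1-α)/2 * wTS * Real.sqrt (deg w x.1) / wT
          ≤ (∑ y, φ y * v y) * v x / (∑ y, v y ^ 2) :=
        div_le_div₀ (mul_nonneg hφvnn (hvpos x).le) hnum3 hvsqpos hvsq_le
      have hfin : (1/2) * (1-α) * (wTS/wT) * Real.sqrt (deg w x.1)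
          = (1-α)/2 * wTS * Real.sqrt (deg w x.1) / wT := by
        field_simp
      rw [hfin]
      exact hstep
    -- define Δ
    set β : Fin (T i).card → ℝ := fun j => (1 - lam j / 2)^k with hβ
    set d : Fin (T i).card → ℝ := fun j => if j = j0 then 0 else c j * β j with hd
    have hRd : ∀ x, ∑ j ∈ Finset.univ.erase j0, (c j * β j) * u j x = ∑ j, d j * u j x := by
      intro x
      rw [← Finset.add_sum_erase _ (fun j => d j * u j x) (Finset.mem_univ j0)]
      have : d j0 = 0 := by rw [hd]; simp
      rw [this, zero_mul, zero_add]
      exact Finset.sum_congr rfl fun j hj => by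
        rw [hd]; simp only [if_neg (Finset.ne_of_mem_erase hj)]
    refine ⟨fun x => (1-α)^k * ∑ j ∈ Finset.univ.erase j0, (c j * β j) * u j x, ?_, ?_⟩
    · -- norm bound
      simp only [htsub]
      have e1 : ∀ x : ↥(T i), ((1-α)^k * ∑ j ∈ Finset.univ.erase j0, (c j * β j) * u j x)^2
          = ((1-α)^k)^2 * (∑ j, d j * u j x)^2 := by
        intro x
        rw [hRd x, mul_pow]
      rw [Finset.sum_congr rfl fun x _ => e1 x, ← Finset.mul_sum]
      rw [aux_parseval u horth d]
      have hβ1nn : 0 ≤ 1 - lam j1 / 2 := by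
        have := hlam_le2 j1
        linarith
      have hd2 : ∀ j, d j ^ 2 ≤ ((1 - lam j1 / 2)^k)^2 * c j ^ 2 := by
        intro j
        by_cases hj : j = j0
        · rw [hd]; simp only [hj, eq_self_iff_true, if_true]
          have h0 : ((0:ℝ))^2 = 0 := by norm_num
          rw [h0]
          positivity
        · rw [hd]; simp only [if_neg hj]
          have hβj : 0 ≤ 1 - lam j / 2 := by
            have := hlam_le2 j
            linarith
          have hle : 1 - lam j / 2 ≤ 1 - lam j1 / 2 := by
            have hj0v : (j0 : ℕ) = 0 := rfl
            have hj1v : (j1 : ℕ) = 1 := rfl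
            have h1 : j1 ≤ j := by
              have hv : (1:ℕ) ≤ j.1 := by
                by_contra hc
                push_neg at hc
                exact hj (Fin.ext (by rw [hj0v]; omega))
              rw [Fin.le_def, hj1v]
              exact hv
            have := hmono h1
            linarith
          have hp : β j ≤ (1 - lam j1 / 2)^k := by
            rw [hβ]
            exact pow_le_pow_left₀ hβj hle k
          have hpnn : 0 ≤ β j := by rw [hβ]; positivity
          have : (c j * β j)^2 = β j ^2 * c j ^2 := by ring
          rw [this]
          have : β j ^ 2 ≤ ((1 - lam j1 / 2)^k)^2 := by
            nlinarith
          nlinarith [sq_nonneg (c j)]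
      have hsum_c : ∑ j, c j ^ 2 ≤ wT := by
        have e3 : ∀ x : ↥(T i), φ x ^ 2 = (∑ j, c j * u j x)^2 := by
          intro x
          have h := hexpand φ x
          rw [Finset.sum_congr rfl (fun j (_ : j ∈ Finset.univ) => by rw [← hcj j])] at h
          rw [← h]
        have e2 : ∑ x : ↥(T i), φ x ^ 2 = ∑ j, c j ^ 2 := by
          rw [Finset.sum_congr rfl fun x _ => e3 x]
          exact aux_parseval u horth c
        rw [← e2]
        exact hφsq
      have hchain : ∑ j, d j ^ 2 ≤ ((1 - lam j1 / 2)^k)^2 * wT := by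
        calc ∑ j, d j ^ 2 ≤ ∑ j, ((1 - lam j1 / 2)^k)^2 * c j ^ 2 :=
              Finset.sum_le_sum fun j _ => hd2 j
          _ = ((1 - lam j1 / 2)^k)^2 * ∑ j, c j ^ 2 := by rw [← Finset.mul_sum]
          _ ≤ ((1 - lam j1 / 2)^k)^2 * wT := by
              have : (0:ℝ) ≤ ((1 - lam j1 / 2)^k)^2 := sq_nonneg _
              nlinarith [hsum_c]
      have hα2k : ((1-α)^k)^2 ≤ 1 := by
        have h1 : (1-α)^k ≤ 1 := pow_le_one₀ h1α.le (by linarith)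
        have h2 : (0:ℝ) ≤ (1-α)^k := pow_nonneg h1α.le k
        nlinarith
      have hepow : ((1 - lam j1 / 2)^k)^2 = (1 - lam j1 / 2)^(2*k) := by
        rw [← pow_mul, mul_comm]
      calc ((1-α)^k)^2 * ∑ j, d j ^ 2 ≤ 1 * (((1 - lam j1 / 2)^k)^2 * wT) := by
            nlinarith [Finset.sum_nonneg (fun j (_ : j ∈ Finset.univ) => sq_nonneg (d j)), hchain, sq_nonneg ((1-α)^k)]
        _ = (1 - lam j1 / 2)^(2*k) * wT := by rw [one_mul, hepow]
    · -- pointwise bound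
      intro x
      have hsplit : (MT^k *ᵥ φ) x = c j0 * u j0 x +
          ∑ j ∈ Finset.univ.erase j0, (c j * β j) * u j x := by
        rw [hspec k x]
        rw [← Finset.add_sum_erase _ (fun j => c j * (1 - lam j / 2)^k * u j x)
          (Finset.mem_univ j0)]
        rw [hlamj0]
        norm_num
        rfl
      have h1 : (1/2) * (1-α)^(k+1) * (wTS/wT) * Real.sqrt (deg w x.1)
          ≤ (1-α)^k * (c j0 * u j0 x) := by
        have h2 := mul_le_mul_of_nonneg_left (hmain x) (pow_nonneg h1α.le k)
        calc (1/2) * (1-α)^(k+1) * (wTS/wT) * Real.sqrt (deg w x.1)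
            = (1-α)^k * ((1/2) * (1-α) * (wTS/wT) * Real.sqrt (deg w x.1)) := by
              rw [pow_succ]; ring
          _ ≤ (1-α)^k * (c j0 * u j0 x) := h2
      have h3 : (1-α)^k * (c j0 * u j0 x) +
          (1-α)^k * ∑ j ∈ Finset.univ.erase j0, (c j * β j) * u j x
          = (1-α)^k * (MT^k *ᵥ φ) x := by
        rw [hsplit]
        ring
      have h4 := hBφ x
      have h5 := hrest x
      simp only [htsub]
      linarith [h1]
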